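/- The maximum of (C_{q'}/C_q)·exp(|q'−q|/b) over all q, q' ∈ [l,u] with |q'−q| ≤ ΔQ is attained at q = l, q' = l + ΔQ; that is, for all such q, q', (C_{q'}/C_q)·exp(|q'−q|/b) ≤ (C_{l+ΔQ}/C_l)·exp(ΔQ/b). -/

import Mathlib

open Real

/-- Normalisation constant of the bounded Laplace mechanism on `[l,u]`. -/
noncomputable def C (l u b q : ℝ) : ℝ :=
  1 - (1 / 2) * (Real.exp (-(q - l) / b) + Real.exp (-(u - q) / b))

lemma Cexp (l u b r : ℝ) (hb : b ≠ 0) :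
    C l u b r = 1 - (Real.exp (-(r - l) / b)
      + Real.exp (-(u - l) / b) / Real.exp (-(r - l) / b)) / 2 := by
  have h : Real.exp (-(u - l) / b) / Real.exp (-(r - l) / b)
      = Real.exp (-(u - r) / b) := by
    rw [← Real.exp_sub]
    congr 1
    field_simp
    ring
  rw [h]
  unfold C
  ring

lemma Csym (l u b q : ℝ) : C l u b (l + u - q) = C l u b q := by
  unfold C
  have h1 : -(l + u - q - l) / b = -(u - q) / b := by ring
  have h2 : -(u - (l + u - q)) / b = -(q - l) / b := by ring
  rw [h1, h2]
  ring

lemma stepA (x δ E : ℝ) (hx : 0 < x) (hx1 : x ≤ 1) (hδ : 0 < δ) (hδ1 : δ ≤ 1)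
    (hE : 0 < E) (hExδ : E ≤ x * δ) :
    (1 - (x * δ + E / (x * δ)) / 2) * (1 - (1 + E) / 2)
      ≤ (1 - (δ + E / δ) / 2) * (1 - (x + E / x) / 2) := by
  have hkey : ((1 - (δ + E / δ) / 2) * (1 - (x + E / x) / 2)
      - (1 - (x * δ + E / (x * δ)) / 2) * (1 - (1 + E) / 2)) * (4 * x * δ)
      = (1 - δ) * (1 - x) * (E * (1 - x) + δ * (2 * x - E * (1 + x))) := by
    field_simp
    ring
  have hEx : E ≤ x := le_trans hExδ (by nlinarith)
  have hfac : 0 ≤ (1 - δ) * (1 - x) * (E * (1 - x) + δ * (2 * x - E * (1 + x))) := by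
    have h1 : 0 ≤ 2 * x - E * (1 + x) := by nlinarith
    have h3 : 0 ≤ E * (1 - x) + δ * (2 * x - E * (1 + x)) := by nlinarith
    have h4 : 0 ≤ (1 - δ) * (1 - x) := by nlinarith
    exact mul_nonneg h4 h3
  nlinarith [hkey, hfac, mul_pos hx hδ]

lemma stepB (δ Δ E : ℝ) (hΔ : 0 < Δ) (hΔδ : Δ ≤ δ) (hE : 0 < E) (hEΔ : E ≤ Δ) :
    Δ * (1 - (δ + E / δ) / 2) ≤ δ * (1 - (Δ + E / Δ) / 2) := by
  have hδ : 0 < δ := lt_of_lt_of_le hΔ hΔδ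
  have hkey : (δ * (1 - (Δ + E / Δ) / 2) - Δ * (1 - (δ + E / δ) / 2)) * (2 * δ * Δ)
      = (δ - Δ) * (2 * δ * Δ - E * (δ + Δ)) := by
    field_simp
    ring
  have hfac : 0 ≤ (δ - Δ) * (2 * δ * Δ - E * (δ + Δ)) := by
    have h1 : 0 ≤ 2 * δ * Δ - E * (δ + Δ) := by nlinarith
    nlinarith
  have h2 : (0:ℝ) < 2 * δ * Δ := by positivity
  have h3 : δ * (1 - (Δ + E / Δ) / 2) - Δ * (1 - (δ + E / δ) / 2)
      = (δ - Δ) * (2 * δ * Δ - E * (δ + Δ)) / (2 * δ * Δ) := by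
    rw [eq_div_iff h2.ne']; exact hkey
  have h4 := h3 ▸ div_nonneg hfac h2.le
  linarith

set_option maxHeartbeats 1000000 in
lemma key (l u b ΔQ q d : ℝ) (hlu : l < u) (hb : 0 < b) (hΔQu : ΔQ ≤ u - l)
    (hq : l ≤ q) (hd0 : 0 ≤ d) (hdu : q + d ≤ u) (hdΔ : d ≤ ΔQ) :
    (C l u b (q + d) / C l u b q) * Real.exp (d / b)
      ≤ (C l u b (l + ΔQ) / C l u b l) * Real.exp (ΔQ / b) := by
  have hbne : b ≠ 0 := hb.ne'
  set E := Real.exp (-(u - l) / b) with hEdef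
  set x := Real.exp (-(q - l) / b) with hxdef
  set δ := Real.exp (-d / b) with hδdef
  set Δ := Real.exp (-ΔQ / b) with hΔdef
  have hEpos : 0 < E := Real.exp_pos _
  have hxpos : 0 < x := Real.exp_pos _
  have hδpos : 0 < δ := Real.exp_pos _
  have hΔpos : 0 < Δ := Real.exp_pos _
  have hE1 : E < 1 := by
    rw [hEdef, Real.exp_lt_one_iff]
    exact div_neg_of_neg_of_pos (by linarith) hb
  have hx1 : x ≤ 1 := by
    rw [hxdef, Real.exp_le_one_iff]
    apply div_nonpos_of_nonpos_of_nonneg <;> linarith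
  have hδ1 : δ ≤ 1 := by
    rw [hδdef, Real.exp_le_one_iff]
    apply div_nonpos_of_nonpos_of_nonneg <;> linarith
  have hΔδle : Δ ≤ δ := by
    rw [hΔdef, hδdef, Real.exp_le_exp]
    exact (div_le_div_iff_of_pos_right hb).mpr (by linarith)
  have hEΔ : E ≤ Δ := by
    rw [hEdef, hΔdef, Real.exp_le_exp]
    exact (div_le_div_iff_of_pos_right hb).mpr (by linarith)
  have hExδ : E ≤ x * δ := by
    rw [hEdef, hxdef, hδdef, ← Real.exp_add, Real.exp_le_exp,
      show -(q - l) / b + -d / b = -(q + d - l) / b by ring]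
    exact (div_le_div_iff_of_pos_right hb).mpr (by linarith)
  -- rewrite the C's
  have hCq : C l u b q = 1 - (x + E / x) / 2 := Cexp l u b q hbne
  have hCqd : C l u b (q + d) = 1 - (x * δ + E / (x * δ)) / 2 := by
    rw [Cexp l u b (q + d) hbne,
      show -(q + d - l) / b = -(q - l) / b + -d / b by ring, Real.exp_add]
  have hCl : C l u b l = 1 - (1 + E) / 2 := by
    rw [Cexp l u b l hbne, show -(l - l) / b = (0:ℝ) by simp, Real.exp_zero, div_one]
  have hClΔ : C l u b (l + ΔQ) = 1 - (Δ + E / Δ) / 2 := by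
    rw [Cexp l u b (l + ΔQ) hbne,
      show -(l + ΔQ - l) / b = -ΔQ / b by ring]
  have hCld : C l u b (l + d) = 1 - (δ + E / δ) / 2 := by
    rw [Cexp l u b (l + d) hbne,
      show -(l + d - l) / b = -d / b by ring]
  -- positivity of denominators
  have hEx : E ≤ x := by nlinarith
  have hExdiv : E / x ≤ 1 := by rw [div_le_one hxpos]; exact hEx
  have hEmul : E / x * x = E := div_mul_cancel₀ _ hxpos.ne'
  have hBpos : 0 < 1 - (x + E / x) / 2 := by
    nlinarith [mul_nonneg (sub_nonneg.2 hExdiv) (sub_nonneg.2 hx1)]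
  have hClpos : 0 < 1 - (1 + E) / 2 := by linarith
  -- exponents
  have hexpd : Real.exp (d / b) = δ⁻¹ := by
    rw [hδdef, ← Real.exp_neg]
    congr 1
    ring
  have hexpΔ : Real.exp (ΔQ / b) = Δ⁻¹ := by
    rw [hΔdef, ← Real.exp_neg]
    congr 1
    ring
  rw [hCq, hCqd, hCl, hClΔ, hexpd, hexpΔ]
  set A := 1 - (x * δ + E / (x * δ)) / 2 with hA
  set B := 1 - (x + E / x) / 2 with hB
  set Cl := 1 - (1 + E) / 2 with hCl2
  set Dd := 1 - (δ + E / δ) / 2 with hDd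
  set DΔ := 1 - (Δ + E / Δ) / 2 with hDΔ
  have sA : A * Cl ≤ Dd * B := stepA x δ E hxpos hx1 hδpos hδ1 hEpos hExδ
  have sB : Δ * Dd ≤ δ * DΔ := stepB δ Δ E hΔpos hΔδle hEpos hEΔ
  rw [← div_eq_mul_inv, ← div_eq_mul_inv, div_div, div_div,
    div_le_div_iff₀ (by positivity) (by positivity)]
  have c1 : A * Cl * Δ ≤ Dd * B * Δ := mul_le_mul_of_nonneg_right sA hΔpos.le
  have c2 : Δ * Dd * B ≤ δ * DΔ * B := mul_le_mul_of_nonneg_right sB hBpos.le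
  nlinarith [c1, c2]

theorem max_ratio (l u b ΔQ : ℝ) (hlu : l < u) (hb : 0 < b)
    (hΔQ : 0 < ΔQ) (hΔQu : ΔQ ≤ u - l)
    (q q' : ℝ) (hq : q ∈ Set.Icc l u) (hq' : q' ∈ Set.Icc l u)
    (hd : |q' - q| ≤ ΔQ) :
    (C l u b q' / C l u b q) * Real.exp (|q' - q| / b)
      ≤ (C l u b (l + ΔQ) / C l u b l) * Real.exp (ΔQ / b) := by
  obtain ⟨hql, hqu⟩ := hq
  obtain ⟨hq'l, hq'u⟩ := hq'
  rcases le_total q q' with h | h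
  · have habs : |q' - q| = q' - q := abs_of_nonneg (by linarith)
    rw [habs] at hd ⊢
    have := key l u b ΔQ q (q' - q) hlu hb hΔQu hql (by linarith)
      (by linarith) hd
    rwa [show q + (q' - q) = q' by ring] at this
  · have habs : |q' - q| = q - q' := by
      rw [abs_sub_comm]; exact abs_of_nonneg (by linarith)
    rw [habs] at hd ⊢
    rw [← Csym l u b q', ← Csym l u b q]
    have := key l u b ΔQ (l + u - q) (q - q') hlu hb hΔQu (by linarith)
      (by linarith) (by linarith) hd
    rwa [show l + u - q + (q - q') = l + u - q' by ring] at this
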